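/- For every n ≥ 1 one has τₙ ∘ σ₀ = σₙ ∘ τ_{n+1}² as linear maps H^{⊗(n+1)} → H^{⊗n}. -/

import Mathlib

/-!
Let `H` be a Hopf algebra over `ℂ` with coproduct `Δ = Coalgebra.comul`, counit
`ε = Coalgebra.counit`, antipode `S = HopfAlgebra.antipode` and unit `1`.  We fix a
character `δ : H →ₐ[ℂ] ℂ`.  The `δ`-twisted antipode is the linear map
`S̃(h) = ∑ δ(h₍₁₎) S(h₍₂₎)`.
-/

open TensorProduct

noncomputable section

variable (H : Type) [Ring H] [HopfAlgebra ℂ H]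

/-- The `δ`-twisted antipode `S̃(h) = ∑ δ(h₍₁₎) S(h₍₂₎)`. -/
def twistedAntipode (δ : H →ₐ[ℂ] ℂ) : H →ₗ[ℂ] H :=
  (TensorProduct.lid ℂ H).toLinearMap ∘ₗ
    (TensorProduct.map δ.toLinearMap (HopfAlgebra.antipode (R := ℂ))) ∘ₗ
      Coalgebra.comul

/-- A type bundled with a `ℂ`-algebra structure (used to form iterated tensor powers). -/
structure AlgPack : Type 1 where
  carrier : Type
  [ring : Ring carrier]
  [alg : Algebra ℂ carrier]

attribute [instance] AlgPack.ring AlgPack.alg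

/-- The iterated tensor powers of `H`: `XB H n` bundles `H^{⊗(n+1)}` together with its
(componentwise) algebra structure coming from `Algebra.TensorProduct`. -/
def XB : ℕ → AlgPack
  | 0 => ⟨H⟩
  | n + 1 => ⟨H ⊗[ℂ] (XB n).carrier⟩

/-- `X H n` is the tensor power `H^{⊗(n+1)}`; its multiplication `*` is the componentwise
product and its unit `1` is `1 ⊗ ... ⊗ 1`. -/
abbrev X (n : ℕ) : Type := (XB H n).carrier

/-- The pure tensor `h 0 ⊗ h 1 ⊗ ... ⊗ h n ∈ H^{⊗(n+1)}`. -/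
def tp : ∀ n, (Fin (n + 1) → H) → X H n
  | 0, h => h 0
  | n + 1, h => h 0 ⊗ₜ[ℂ] tp n (Fin.tail h)

/-- The `n`-fold iterated coproduct `Δ⁽ⁿ⁾ : H →ₗ H^{⊗(n+1)}`. -/
def Δiter : ∀ n, H →ₗ[ℂ] X H n
  | 0 => LinearMap.id
  | n + 1 => (TensorProduct.map LinearMap.id (Δiter n)) ∘ₗ Coalgebra.comul

/-- The face operators `δᵢ : H^{⊗(n+1)} →ₗ H^{⊗(n+2)}` (`0 ≤ i ≤ n + 2`):
`δ₀ = 1 ⊗ ·`, `δⱼ` applies `Δ` to the `j`-th factor for `1 ≤ j ≤ n + 1`, and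
`δ_{n+2}` appends `1` on the right. -/
def dX : ℕ → ∀ n, X H n →ₗ[ℂ] X H (n + 1)
  | 0, n => TensorProduct.mk ℂ H (X H n) 1
  | 1, 0 => (Coalgebra.comul : H →ₗ[ℂ] H ⊗[ℂ] H)
  | 1, n + 1 => (TensorProduct.assoc ℂ H H (X H n)).toLinearMap ∘ₗ
      (TensorProduct.map Coalgebra.comul LinearMap.id)
  | _ + 2, 0 => (TensorProduct.mk ℂ H H).flip 1
  | i + 2, n + 1 => TensorProduct.map LinearMap.id (dX (i + 1) n)

/-- The degeneracy operators `σᵢ : H^{⊗(n+2)} →ₗ H^{⊗(n+1)}` (`0 ≤ i ≤ n + 1`):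
`σᵢ` applies the counit `ε` to the `(i+1)`-st factor. -/
def sX : ℕ → ∀ n, X H (n + 1) →ₗ[ℂ] X H n
  | 0, n => (TensorProduct.lid ℂ (X H n)).toLinearMap ∘ₗ
      TensorProduct.map Coalgebra.counit LinearMap.id
  | _ + 1, 0 => (TensorProduct.rid ℂ H).toLinearMap ∘ₗ
      TensorProduct.map LinearMap.id (Coalgebra.counit : H →ₗ[ℂ] ℂ)
  | i + 1, n + 1 => TensorProduct.map LinearMap.id (sX i n)

/-- Appending `1 ∈ H` on the right: `h¹ ⊗ ... ⊗ h^{n+1} ↦ h¹ ⊗ ... ⊗ h^{n+1} ⊗ 1`. -/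
def appOne : ∀ n, X H n →ₗ[ℂ] X H (n + 1)
  | 0 => (TensorProduct.mk ℂ H H).flip 1
  | n + 1 => TensorProduct.map LinearMap.id (appOne n)

/-- The cyclic operator `τₙ : H^{⊗n} →ₗ H^{⊗n}` (here at index `X H n = H^{⊗(n+1)}`):
`τ(h¹ ⊗ ... ⊗ h^{n+1}) = Δ⁽ⁿ⁾(S̃(h¹)) · (h² ⊗ ... ⊗ h^{n+1} ⊗ 1)`,
where `·` is the componentwise product of `H^{⊗(n+1)}`. -/
def tauX (δ : H →ₐ[ℂ] ℂ) : ∀ n, X H n →ₗ[ℂ] X H n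
  | 0 => twistedAntipode H δ
  | n + 1 => LinearMap.mul' ℂ (X H (n + 1)) ∘ₗ
      TensorProduct.map (Δiter H (n + 1) ∘ₗ twistedAntipode H δ) (appOne H n)

open TensorProduct Coalgebra

namespace HopfAux

section Conv

variable {C A : Type} [AddCommMonoid C] [Module ℂ C] [Ring A] [Algebra ℂ A]

/-- Convolution product of linear maps, w.r.t. an explicit comultiplication `D`. -/
noncomputable def conv (D : C →ₗ[ℂ] C ⊗[ℂ] C) (f g : C →ₗ[ℂ] A) : C →ₗ[ℂ] A :=
  LinearMap.mul' ℂ A ∘ₗ TensorProduct.map f g ∘ₗ D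

/-- Convolution unit w.r.t. an explicit counit `E`. -/
noncomputable def convOne (E : C →ₗ[ℂ] ℂ) : C →ₗ[ℂ] A := Algebra.linearMap ℂ A ∘ₗ E

lemma conv_assoc (D : C →ₗ[ℂ] C ⊗[ℂ] C)
    (hco : (TensorProduct.assoc ℂ C C C).toLinearMap ∘ₗ D.rTensor C ∘ₗ D = D.lTensor C ∘ₗ D)
    (f g h : C →ₗ[ℂ] A) : conv D (conv D f g) h = conv D f (conv D g h) := by
  have e1 : TensorProduct.map (LinearMap.mul' ℂ A ∘ₗ TensorProduct.map f g ∘ₗ D) h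
      = (LinearMap.mul' ℂ A).rTensor A ∘ₗ TensorProduct.map (TensorProduct.map f g) h
          ∘ₗ D.rTensor C := by
    apply TensorProduct.ext'; intro x y; simp
  have e2 : TensorProduct.map f (LinearMap.mul' ℂ A ∘ₗ TensorProduct.map g h ∘ₗ D)
      = (LinearMap.mul' ℂ A).lTensor A ∘ₗ TensorProduct.map f (TensorProduct.map g h)
          ∘ₗ D.lTensor C := by
    apply TensorProduct.ext'; intro x y; simp
  have e3 : LinearMap.mul' ℂ A ∘ₗ (LinearMap.mul' ℂ A).rTensor A
      = (LinearMap.mul' ℂ A ∘ₗ (LinearMap.mul' ℂ A).lTensor A)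
         ∘ₗ (TensorProduct.assoc ℂ A A A).toLinearMap := by
    apply TensorProduct.ext_threefold; intro x y z; simp [mul_assoc]
  have e4 : (TensorProduct.assoc ℂ A A A).toLinearMap
        ∘ₗ TensorProduct.map (TensorProduct.map f g) h
      = TensorProduct.map f (TensorProduct.map g h)
          ∘ₗ (TensorProduct.assoc ℂ C C C).toLinearMap := by
    apply TensorProduct.ext_threefold; intro x y z; simp
  unfold conv
  rw [e1, e2]
  calc (LinearMap.mul' ℂ A) ∘ₗ ((LinearMap.mul' ℂ A).rTensor A
          ∘ₗ TensorProduct.map (TensorProduct.map f g) h ∘ₗ D.rTensor C) ∘ₗ D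
      = (LinearMap.mul' ℂ A ∘ₗ (LinearMap.mul' ℂ A).rTensor A)
          ∘ₗ TensorProduct.map (TensorProduct.map f g) h ∘ₗ D.rTensor C ∘ₗ D := by
        simp only [LinearMap.comp_assoc]
    _ = (LinearMap.mul' ℂ A ∘ₗ (LinearMap.mul' ℂ A).lTensor A)
          ∘ₗ ((TensorProduct.assoc ℂ A A A).toLinearMap
          ∘ₗ TensorProduct.map (TensorProduct.map f g) h) ∘ₗ D.rTensor C ∘ₗ D := by
        rw [e3]; simp only [LinearMap.comp_assoc]
    _ = (LinearMap.mul' ℂ A ∘ₗ (LinearMap.mul' ℂ A).lTensor A)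
          ∘ₗ TensorProduct.map f (TensorProduct.map g h)
          ∘ₗ (TensorProduct.assoc ℂ C C C).toLinearMap ∘ₗ D.rTensor C ∘ₗ D := by
        rw [e4]; simp only [LinearMap.comp_assoc]
    _ = (LinearMap.mul' ℂ A) ∘ₗ ((LinearMap.mul' ℂ A).lTensor A
          ∘ₗ TensorProduct.map f (TensorProduct.map g h) ∘ₗ D.lTensor C) ∘ₗ D := by
        rw [hco]; simp only [LinearMap.comp_assoc]

lemma one_conv (D : C →ₗ[ℂ] C ⊗[ℂ] C) (E : C →ₗ[ℂ] ℂ)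
    (h1 : E.rTensor C ∘ₗ D = TensorProduct.mk ℂ ℂ C 1) (f : C →ₗ[ℂ] A) :
    conv D (convOne E) f = f := by
  have e : TensorProduct.map ((Algebra.linearMap ℂ A ∘ₗ E : C →ₗ[ℂ] A)) f
      = TensorProduct.map (Algebra.linearMap ℂ A) f ∘ₗ E.rTensor C := by
    apply TensorProduct.ext'; intro x y; simp
  apply LinearMap.ext; intro c
  show LinearMap.mul' ℂ A ((TensorProduct.map (Algebra.linearMap ℂ A ∘ₗ E) f) (D c)) = f c
  rw [e, LinearMap.comp_apply, ← LinearMap.comp_apply (E.rTensor C) D, h1]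
  simp

lemma conv_one (D : C →ₗ[ℂ] C ⊗[ℂ] C) (E : C →ₗ[ℂ] ℂ)
    (h2 : E.lTensor C ∘ₗ D = (TensorProduct.mk ℂ C ℂ).flip 1) (f : C →ₗ[ℂ] A) :
    conv D f (convOne E) = f := by
  have e : TensorProduct.map f ((Algebra.linearMap ℂ A ∘ₗ E : C →ₗ[ℂ] A))
      = TensorProduct.map f (Algebra.linearMap ℂ A) ∘ₗ E.lTensor C := by
    apply TensorProduct.ext'; intro x y; simp
  apply LinearMap.ext; intro c
  show LinearMap.mul' ℂ A ((TensorProduct.map f (Algebra.linearMap ℂ A ∘ₗ E)) (D c)) = f c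
  rw [e, LinearMap.comp_apply, ← LinearMap.comp_apply (E.lTensor C) D, h2]
  simp

end Conv

end HopfAux
section AntipodeMul

variable {B : Type} [Ring B] [HopfAlgebra ℂ B]

/-- Comultiplication on `B ⊗ B` (explicit, avoiding the categorical instance). -/
noncomputable def DT : B ⊗[ℂ] B →ₗ[ℂ] (B ⊗[ℂ] B) ⊗[ℂ] (B ⊗[ℂ] B) :=
  (TensorProduct.tensorTensorTensorComm ℂ B B B B).toLinearMap
    ∘ₗ TensorProduct.map (Coalgebra.comul (R := ℂ)) (Coalgebra.comul (R := ℂ))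

/-- Counit on `B ⊗ B`. -/
noncomputable def ET : B ⊗[ℂ] B →ₗ[ℂ] ℂ :=
  LinearMap.mul' ℂ ℂ ∘ₗ TensorProduct.map (Coalgebra.counit (R := ℂ)) (Coalgebra.counit (R := ℂ))

lemma DT_coassoc :
    (TensorProduct.assoc ℂ (B ⊗[ℂ] B) (B ⊗[ℂ] B) (B ⊗[ℂ] B)).toLinearMap
        ∘ₗ (DT (B := B)).rTensor _ ∘ₗ DT = (DT (B := B)).lTensor _ ∘ₗ DT := by
  have e1 : (DT (B := B)).rTensor (B ⊗[ℂ] B)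
        ∘ₗ (TensorProduct.tensorTensorTensorComm ℂ B B B B).toLinearMap
      = (TensorProduct.tensorTensorTensorComm ℂ B B B B).toLinearMap.rTensor _
          ∘ₗ (TensorProduct.tensorTensorTensorComm ℂ (B ⊗[ℂ] B) B (B ⊗[ℂ] B) B).toLinearMap
          ∘ₗ TensorProduct.map ((Coalgebra.comul (R := ℂ)).rTensor B)
              ((Coalgebra.comul (R := ℂ)).rTensor B) := by
    apply TensorProduct.ext_fourfold'; intro x1 x2 y1 y2
    simp [DT]
  have e2 : (DT (B := B)).lTensor (B ⊗[ℂ] B)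
        ∘ₗ (TensorProduct.tensorTensorTensorComm ℂ B B B B).toLinearMap
      = (TensorProduct.tensorTensorTensorComm ℂ B B B B).toLinearMap.lTensor _
          ∘ₗ (TensorProduct.tensorTensorTensorComm ℂ B (B ⊗[ℂ] B) B (B ⊗[ℂ] B)).toLinearMap
          ∘ₗ TensorProduct.map ((Coalgebra.comul (R := ℂ)).lTensor B)
              ((Coalgebra.comul (R := ℂ)).lTensor B) := by
    apply TensorProduct.ext_fourfold'; intro x1 x2 y1 y2
    simp [DT]
  have e3 : (TensorProduct.assoc ℂ (B ⊗[ℂ] B) (B ⊗[ℂ] B) (B ⊗[ℂ] B)).toLinearMap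
        ∘ₗ (TensorProduct.tensorTensorTensorComm ℂ B B B B).toLinearMap.rTensor _
        ∘ₗ (TensorProduct.tensorTensorTensorComm ℂ (B ⊗[ℂ] B) B (B ⊗[ℂ] B) B).toLinearMap
      = ((TensorProduct.tensorTensorTensorComm ℂ B B B B).toLinearMap.lTensor _
          ∘ₗ (TensorProduct.tensorTensorTensorComm ℂ B (B ⊗[ℂ] B) B (B ⊗[ℂ] B)).toLinearMap)
          ∘ₗ TensorProduct.map (TensorProduct.assoc ℂ B B B).toLinearMap
              (TensorProduct.assoc ℂ B B B).toLinearMap := by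
    ext
    simp
  have E1 := congrArg (fun T => T ∘ₗ TensorProduct.map (Coalgebra.comul (R := ℂ) (A := B))
      (Coalgebra.comul (R := ℂ) (A := B))) e1
  have E2 := congrArg (fun T => T ∘ₗ TensorProduct.map (Coalgebra.comul (R := ℂ) (A := B))
      (Coalgebra.comul (R := ℂ) (A := B))) e2
  have E3 := congrArg (fun T => T ∘ₗ TensorProduct.map
      ((Coalgebra.comul (R := ℂ) (A := B)).rTensor B ∘ₗ Coalgebra.comul)
      ((Coalgebra.comul (R := ℂ) (A := B)).rTensor B ∘ₗ Coalgebra.comul)) e3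
  simp only [LinearMap.comp_assoc, ← TensorProduct.map_comp] at E1 E2 E3
  show (TensorProduct.assoc ℂ (B ⊗[ℂ] B) (B ⊗[ℂ] B) (B ⊗[ℂ] B)).toLinearMap
      ∘ₗ (DT (B := B)).rTensor _
      ∘ₗ (TensorProduct.tensorTensorTensorComm ℂ B B B B).toLinearMap
      ∘ₗ TensorProduct.map (Coalgebra.comul (R := ℂ)) (Coalgebra.comul (R := ℂ))
    = (DT (B := B)).lTensor _
      ∘ₗ (TensorProduct.tensorTensorTensorComm ℂ B B B B).toLinearMap
      ∘ₗ TensorProduct.map (Coalgebra.comul (R := ℂ)) (Coalgebra.comul (R := ℂ))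
  rw [E1, E3, Coalgebra.coassoc, ← E2]

lemma DT_rcounit : (ET (B := B)).rTensor _ ∘ₗ DT = TensorProduct.mk ℂ ℂ (B ⊗[ℂ] B) 1 := by
  have e : (ET (B := B)).rTensor (B ⊗[ℂ] B)
        ∘ₗ (TensorProduct.tensorTensorTensorComm ℂ B B B B).toLinearMap
      = (LinearMap.mul' ℂ ℂ).rTensor _
          ∘ₗ (TensorProduct.tensorTensorTensorComm ℂ ℂ B ℂ B).toLinearMap
          ∘ₗ TensorProduct.map ((Coalgebra.counit (R := ℂ)).rTensor B)
              ((Coalgebra.counit (R := ℂ)).rTensor B) := by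
    apply TensorProduct.ext_fourfold'; intro x1 x2 y1 y2
    simp [ET]
  have E := congrArg (fun T => T ∘ₗ TensorProduct.map (Coalgebra.comul (R := ℂ) (A := B))
      (Coalgebra.comul (R := ℂ) (A := B))) e
  simp only [LinearMap.comp_assoc, ← TensorProduct.map_comp] at E
  show (ET (B := B)).rTensor _
      ∘ₗ (TensorProduct.tensorTensorTensorComm ℂ B B B B).toLinearMap
      ∘ₗ TensorProduct.map (Coalgebra.comul (R := ℂ)) (Coalgebra.comul (R := ℂ))
    = TensorProduct.mk ℂ ℂ (B ⊗[ℂ] B) 1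
  rw [E, Coalgebra.rTensor_counit_comp_comul]
  apply TensorProduct.ext'; intro a b
  simp

lemma DT_lcounit : (ET (B := B)).lTensor _ ∘ₗ DT = (TensorProduct.mk ℂ (B ⊗[ℂ] B) ℂ).flip 1 := by
  have e : (ET (B := B)).lTensor (B ⊗[ℂ] B)
        ∘ₗ (TensorProduct.tensorTensorTensorComm ℂ B B B B).toLinearMap
      = (LinearMap.mul' ℂ ℂ).lTensor _
          ∘ₗ (TensorProduct.tensorTensorTensorComm ℂ B ℂ B ℂ).toLinearMap
          ∘ₗ TensorProduct.map ((Coalgebra.counit (R := ℂ)).lTensor B)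
              ((Coalgebra.counit (R := ℂ)).lTensor B) := by
    apply TensorProduct.ext_fourfold'; intro x1 x2 y1 y2
    simp [ET]
  have E := congrArg (fun T => T ∘ₗ TensorProduct.map (Coalgebra.comul (R := ℂ) (A := B))
      (Coalgebra.comul (R := ℂ) (A := B))) e
  simp only [LinearMap.comp_assoc, ← TensorProduct.map_comp] at E
  show (ET (B := B)).lTensor _
      ∘ₗ (TensorProduct.tensorTensorTensorComm ℂ B B B B).toLinearMap
      ∘ₗ TensorProduct.map (Coalgebra.comul (R := ℂ)) (Coalgebra.comul (R := ℂ))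
    = (TensorProduct.mk ℂ (B ⊗[ℂ] B) ℂ).flip 1
  rw [E, Coalgebra.lTensor_counit_comp_comul]
  apply TensorProduct.ext'; intro a b
  simp

noncomputable def convF : B ⊗[ℂ] B →ₗ[ℂ] B := LinearMap.mul' ℂ B
noncomputable def convG : B ⊗[ℂ] B →ₗ[ℂ] B :=
  LinearMap.mul' ℂ B ∘ₗ TensorProduct.map (HopfAlgebra.antipode (R := ℂ) (A := B))
    (HopfAlgebra.antipode (R := ℂ) (A := B)) ∘ₗ (TensorProduct.comm ℂ B B).toLinearMap
noncomputable def convG' : B ⊗[ℂ] B →ₗ[ℂ] B :=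
  HopfAlgebra.antipode (R := ℂ) (A := B) ∘ₗ LinearMap.mul' ℂ B

lemma convG'_conv_convF : HopfAux.conv DT convG' convF = HopfAux.convOne (ET (B := B)) := by
  apply TensorProduct.ext'; intro a b
  have aux : (LinearMap.mul' ℂ B ∘ₗ TensorProduct.map convG' convF
        ∘ₗ (TensorProduct.tensorTensorTensorComm ℂ B B B B).toLinearMap)
      = LinearMap.mul' ℂ B ∘ₗ (HopfAlgebra.antipode (R := ℂ) (A := B)).rTensor B
          ∘ₗ LinearMap.mul' ℂ (B ⊗[ℂ] B) := by
    apply TensorProduct.ext_fourfold'; intro x1 x2 y1 y2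
    simp [convG', convF, LinearMap.mul'_apply, Algebra.TensorProduct.tmul_mul_tmul]
  show LinearMap.mul' ℂ B (TensorProduct.map convG' convF (DT (a ⊗ₜ[ℂ] b)))
      = HopfAux.convOne (ET (B := B)) (a ⊗ₜ[ℂ] b)
  have hDT : DT (a ⊗ₜ[ℂ] b) = (TensorProduct.tensorTensorTensorComm ℂ B B B B)
      (Coalgebra.comul a ⊗ₜ[ℂ] Coalgebra.comul b) := by simp [DT]
  rw [hDT]
  have := LinearMap.congr_fun aux (Coalgebra.comul a ⊗ₜ[ℂ] Coalgebra.comul b)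
  simp only [LinearMap.comp_apply, LinearEquiv.coe_coe, TensorProduct.map_tmul] at this ⊢
  rw [this]
  rw [LinearMap.mul'_apply, ← Bialgebra.comul_mul,
    HopfAlgebra.mul_antipode_rTensor_comul_apply]
  simp [HopfAux.convOne, ET, Bialgebra.counit_mul]

set_option maxHeartbeats 1000000 in
lemma convF_conv_convG : HopfAux.conv DT convF convG = HopfAux.convOne (ET (B := B)) := by
  apply TensorProduct.ext'; intro a b
  set ra := Coalgebra.Repr.arbitrary ℂ a with hra
  set rb := Coalgebra.Repr.arbitrary ℂ b with hrb
  show LinearMap.mul' ℂ B (TensorProduct.map convF convG (DT (a ⊗ₜ[ℂ] b)))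
      = HopfAux.convOne (ET (B := B)) (a ⊗ₜ[ℂ] b)
  have hDT : DT (a ⊗ₜ[ℂ] b) = (TensorProduct.tensorTensorTensorComm ℂ B B B B)
      (Coalgebra.comul a ⊗ₜ[ℂ] Coalgebra.comul b) := by simp [DT]
  rw [hDT, ← ra.eq, ← rb.eq]
  simp only [TensorProduct.sum_tmul, TensorProduct.tmul_sum, map_sum,
    TensorProduct.tensorTensorTensorComm_tmul, TensorProduct.map_tmul,
    LinearMap.mul'_apply, convF, convG, LinearMap.comp_apply, LinearEquiv.coe_coe,
    TensorProduct.comm_tmul]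
  have step : ∀ i ∈ ra.index,
      (∑ j ∈ rb.index, (ra.left i * rb.left j) *
        (HopfAlgebra.antipode (R := ℂ) (rb.right j) * HopfAlgebra.antipode (R := ℂ) (ra.right i)))
      = Coalgebra.counit (R := ℂ) b •
          (ra.left i * HopfAlgebra.antipode (R := ℂ) (ra.right i)) := by
    intro i _
    have : (∑ j ∈ rb.index, (ra.left i * rb.left j) *
        (HopfAlgebra.antipode (R := ℂ) (rb.right j) * HopfAlgebra.antipode (R := ℂ) (ra.right i)))
        = ra.left i * ((∑ j ∈ rb.index,
            rb.left j * HopfAlgebra.antipode (R := ℂ) (rb.right j)) *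
              HopfAlgebra.antipode (R := ℂ) (ra.right i)) := by
      rw [Finset.sum_mul, Finset.mul_sum]
      simp only [mul_assoc]
    rw [this, HopfAlgebra.sum_mul_antipode_eq_algebraMap_counit rb, ← Algebra.smul_def, mul_smul_comm]
  rw [Finset.sum_comm, Finset.sum_congr rfl step, ← Finset.smul_sum,
    HopfAlgebra.sum_mul_antipode_eq_algebraMap_counit ra]
  simp only [HopfAux.convOne, LinearMap.comp_apply, ET,
    TensorProduct.map_tmul, LinearMap.mul'_apply, Algebra.linearMap_apply, Algebra.smul_def,
    ← map_mul]
  rw [mul_comm]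

set_option maxHeartbeats 1000000 in
lemma antipode_mul (a b : B) :
    HopfAlgebra.antipode (R := ℂ) (a * b)
      = HopfAlgebra.antipode (R := ℂ) b * HopfAlgebra.antipode (R := ℂ) a := by
  have h : convG' = convG (B := B) := by
    calc convG' = HopfAux.conv DT convG' (HopfAux.convOne (ET (B := B)))
          := (HopfAux.conv_one DT ET DT_lcounit _).symm
    _ = HopfAux.conv DT convG' (HopfAux.conv DT convF convG) := by rw [convF_conv_convG]
    _ = HopfAux.conv DT (HopfAux.conv DT convG' convF) convG
          := (HopfAux.conv_assoc DT DT_coassoc convG' convF convG).symm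
    _ = HopfAux.conv DT (HopfAux.convOne (ET (B := B))) convG := by rw [convG'_conv_convF]
    _ = convG := HopfAux.one_conv DT ET DT_rcounit _
  have := LinearMap.congr_fun h (a ⊗ₜ[ℂ] b)
  simpa [convG', convG, LinearMap.mul'_apply] using this

lemma antipode_one : HopfAlgebra.antipode (R := ℂ) (1 : B) = 1 := by
  have := HopfAlgebra.mul_antipode_rTensor_comul_apply (R := ℂ) (1 : B)
  simpa [Algebra.TensorProduct.one_def] using this

end AntipodeMul




-- Part 2: twisted antipode lemmas
section TwistedLemmas

variable (δ : H →ₐ[ℂ] ℂ)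

lemma twistedAntipode_repr (h : H) {ι : Type*} (r : Coalgebra.Repr ℂ h ι) :
    twistedAntipode H δ h
      = ∑ i ∈ r.index, δ (r.left i) • HopfAlgebra.antipode (R := ℂ) (r.right i) := by
  unfold twistedAntipode
  simp only [LinearMap.comp_apply]
  rw [show Coalgebra.comul (R := ℂ) h = CoalgebraStruct.comul (R := ℂ) h from rfl, ← r.eq]
  simp [map_sum, TensorProduct.lid_tmul]

lemma twistedAntipode_one : twistedAntipode H δ 1 = 1 := by
  unfold twistedAntipode
  simp [Algebra.TensorProduct.one_def, antipode_one]

lemma twistedAntipode_mul (a b : H) :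
    twistedAntipode H δ (a * b) = twistedAntipode H δ b * twistedAntipode H δ a := by
  classical
  set ra := Coalgebra.Repr.arbitrary ℂ a
  set rb := Coalgebra.Repr.arbitrary ℂ b
  have hc : (∑ p ∈ ra.index ×ˢ rb.index,
        (ra.left p.1 * rb.left p.2) ⊗ₜ[ℂ] (ra.right p.1 * rb.right p.2))
      = CoalgebraStruct.comul (R := ℂ) (a * b) := by
    rw [Finset.sum_product,
      show CoalgebraStruct.comul (R := ℂ) (a*b) = Coalgebra.comul (R := ℂ) (a*b) from rfl,
      Bialgebra.comul_mul, ← ra.eq, ← rb.eq, Finset.sum_mul_sum]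
    simp [Algebra.TensorProduct.tmul_mul_tmul]
  rw [twistedAntipode_repr H δ (a * b)
      ⟨ra.index ×ˢ rb.index, fun p => ra.left p.1 * rb.left p.2,
        fun p => ra.right p.1 * rb.right p.2, hc⟩,
    twistedAntipode_repr H δ a ra, twistedAntipode_repr H δ b rb]
  simp only [Finset.sum_product, map_mul, antipode_mul, Finset.sum_mul, Finset.mul_sum,
    smul_mul_assoc, mul_smul_comm, smul_smul, Finset.smul_sum]

lemma sum_twistedAntipode_mul (h : H) {ι : Type*} (r : Coalgebra.Repr ℂ h ι) :
    ∑ i ∈ r.index, twistedAntipode H δ (r.left i) * r.right i = δ h • 1 := by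
  classical
  set F : H ⊗[ℂ] (H ⊗[ℂ] H) →ₗ[ℂ] H :=
    (TensorProduct.lid ℂ H).toLinearMap ∘ₗ
      TensorProduct.map δ.toLinearMap
        (LinearMap.mul' ℂ H ∘ₗ (HopfAlgebra.antipode (R := ℂ) (A := H)).rTensor H) with hF
  have key := congrArg F (Coalgebra.sum_tmul_tmul_eq r
    (fun i => Coalgebra.Repr.arbitrary ℂ (r.left i))
    (fun i => Coalgebra.Repr.arbitrary ℂ (r.right i)))
  simp only [map_sum, hF, LinearMap.comp_apply, TensorProduct.map_tmul,
    LinearMap.rTensor_tmul, LinearMap.mul'_apply, LinearEquiv.coe_coe,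
    TensorProduct.lid_tmul, AlgHom.toLinearMap_apply] at key
  have lhs_eq : ∑ i ∈ r.index, twistedAntipode H δ (r.left i) * r.right i
      = ∑ i ∈ r.index, ∑ j ∈ (Coalgebra.Repr.arbitrary ℂ (r.left i)).index,
          δ ((Coalgebra.Repr.arbitrary ℂ (r.left i)).left j) •
            (HopfAlgebra.antipode (R := ℂ)
              ((Coalgebra.Repr.arbitrary ℂ (r.left i)).right j) * r.right i) := by
    apply Finset.sum_congr rfl; intro i _
    rw [twistedAntipode_repr H δ (r.left i) (Coalgebra.Repr.arbitrary ℂ (r.left i)),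
      Finset.sum_mul]
    simp [smul_mul_assoc]
  rw [lhs_eq, key]
  have rhs_eq : ∀ i ∈ r.index,
      (∑ j ∈ (Coalgebra.Repr.arbitrary ℂ (r.right i)).index,
        δ (r.left i) • (HopfAlgebra.antipode (R := ℂ)
          ((Coalgebra.Repr.arbitrary ℂ (r.right i)).left j) *
            (Coalgebra.Repr.arbitrary ℂ (r.right i)).right j))
      = (δ (r.left i) * Coalgebra.counit (r.right i)) • (1 : H) := by
    intro i _
    rw [← Finset.smul_sum, HopfAlgebra.sum_antipode_mul_eq_smul
      (Coalgebra.Repr.arbitrary ℂ (r.right i)), smul_smul]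
  rw [Finset.sum_congr rfl rhs_eq]
  have hsum : ∑ i ∈ r.index, (Coalgebra.counit (R := ℂ) (r.right i)) • r.left i = h := by
    have h1 := congrArg (TensorProduct.rid ℂ H) (Coalgebra.sum_tmul_counit_eq r)
    simp only [map_sum, TensorProduct.rid_tmul, one_smul] at h1
    exact h1
  have hdel : ∑ i ∈ r.index, δ (r.left i) * Coalgebra.counit (R := ℂ) (r.right i) = δ h := by
    have h2 := congrArg δ hsum
    simp only [map_sum, map_smul, smul_eq_mul] at h2
    rw [← h2]
    exact Finset.sum_congr rfl fun i _ => mul_comm _ _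
  rw [← Finset.sum_smul, hdel]

lemma delta_twistedAntipode (h : H) :
    δ (twistedAntipode H δ h) = Coalgebra.counit (R := ℂ) h := by
  set r := Coalgebra.Repr.arbitrary ℂ h
  rw [twistedAntipode_repr H δ h r, map_sum]
  have term : ∀ i ∈ r.index,
      δ (δ (r.left i) • HopfAlgebra.antipode (R := ℂ) (r.right i))
      = δ (r.left i * HopfAlgebra.antipode (R := ℂ) (r.right i)) := by
    intro i _
    rw [map_smul, map_mul, smul_eq_mul]
  rw [Finset.sum_congr rfl term, ← map_sum, HopfAlgebra.sum_mul_antipode_eq_smul r]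
  simp

end TwistedLemmas
-- Part 3: tensor power lemmas
section TensorPower

lemma X_tmul_mul (m : ℕ) (a b : H) (s t : X H m) :
    (a ⊗ₜ[ℂ] s : X H (m+1)) * (b ⊗ₜ[ℂ] t) = (a * b) ⊗ₜ[ℂ] (s * t) :=
  Algebra.TensorProduct.tmul_mul_tmul a b s t

lemma X_one (m : ℕ) : (1 : X H (m+1)) = (1 : H) ⊗ₜ[ℂ] (1 : X H m) := rfl

/-- `Δiter` as an algebra homomorphism. -/
noncomputable def ΔiterA : ∀ m, H →ₐ[ℂ] X H m
  | 0 => AlgHom.id ℂ H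
  | m + 1 => ((Algebra.TensorProduct.map (AlgHom.id ℂ H) (ΔiterA m)).comp
      (Bialgebra.comulAlgHom ℂ H) : H →ₐ[ℂ] H ⊗[ℂ] X H m)

lemma ΔiterA_toLinearMap : ∀ m, (ΔiterA H m).toLinearMap = Δiter H m
  | 0 => rfl
  | m + 1 => by
    show TensorProduct.map LinearMap.id (ΔiterA H m).toLinearMap ∘ₗ Coalgebra.comul
        = TensorProduct.map LinearMap.id (Δiter H m) ∘ₗ Coalgebra.comul
    rw [ΔiterA_toLinearMap m]

lemma Δiter_mul (m : ℕ) (a b : H) :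
    Δiter H m (a * b) = Δiter H m a * Δiter H m b := by
  rw [← ΔiterA_toLinearMap]
  exact map_mul (ΔiterA H m) a b

lemma Δiter_one (m : ℕ) : Δiter H m 1 = 1 := by
  rw [← ΔiterA_toLinearMap]
  exact map_one (ΔiterA H m)

/-- `appOne` as an algebra homomorphism. -/
noncomputable def appOneA : ∀ m, X H m →ₐ[ℂ] X H (m + 1)
  | 0 => (Algebra.TensorProduct.includeLeft : H →ₐ[ℂ] H ⊗[ℂ] H)
  | m + 1 => (Algebra.TensorProduct.map (AlgHom.id ℂ H) (appOneA m) :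
      H ⊗[ℂ] X H m →ₐ[ℂ] H ⊗[ℂ] X H (m + 1))

lemma appOneA_toLinearMap : ∀ m, (appOneA H m).toLinearMap = appOne H m
  | 0 => rfl
  | m + 1 => by
    show TensorProduct.map LinearMap.id (appOneA H m).toLinearMap
        = TensorProduct.map LinearMap.id (appOne H m)
    rw [appOneA_toLinearMap m]

/-- the last degeneracy as an algebra homomorphism. -/
noncomputable def sLastA : ∀ m, X H (m + 1) →ₐ[ℂ] X H m
  | 0 => ((Algebra.TensorProduct.rid ℂ ℂ H).toAlgHom.comp
      (Algebra.TensorProduct.map (AlgHom.id ℂ H) (Bialgebra.counitAlgHom ℂ H)) :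
        H ⊗[ℂ] H →ₐ[ℂ] H)
  | m + 1 => (Algebra.TensorProduct.map (AlgHom.id ℂ H) (sLastA m) :
      H ⊗[ℂ] X H (m + 1) →ₐ[ℂ] H ⊗[ℂ] X H m)

lemma sLastA_toLinearMap : ∀ m, (sLastA H m).toLinearMap = sX H (m + 1) m
  | 0 => by
    apply TensorProduct.ext'; intro a (b : H)
    show (Algebra.TensorProduct.rid ℂ ℂ H) (a ⊗ₜ[ℂ] (Bialgebra.counitAlgHom ℂ H) b)
        = (TensorProduct.rid ℂ H) (a ⊗ₜ[ℂ] Coalgebra.counit (R := ℂ) b)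
    simp only [Algebra.TensorProduct.rid_tmul, TensorProduct.rid_tmul,
      Bialgebra.counitAlgHom_apply]
  | m + 1 => by
    show TensorProduct.map LinearMap.id (sLastA H m).toLinearMap
        = TensorProduct.map LinearMap.id (sX H (m + 1) m)
    rw [sLastA_toLinearMap m]

lemma algHom_mul' {A B : Type} [Ring A] [Ring B] [Algebra ℂ A] [Algebra ℂ B]
    (φ : A →ₐ[ℂ] B) :
    φ.toLinearMap ∘ₗ LinearMap.mul' ℂ A
      = LinearMap.mul' ℂ B ∘ₗ TensorProduct.map φ.toLinearMap φ.toLinearMap := by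
  apply TensorProduct.ext'; intro x y
  simp [LinearMap.mul'_apply]

end TensorPower
section Main

variable (δ : H →ₐ[ℂ] ℂ)

/-- `G m : h ⊗ t ↦ Δ⁽ᵐ⁾(S̃ h) * t`. -/
noncomputable def GX (m : ℕ) : X H (m+1) →ₗ[ℂ] X H m :=
  LinearMap.mul' ℂ (X H m) ∘ₗ
    TensorProduct.map (Δiter H m ∘ₗ twistedAntipode H δ) LinearMap.id

lemma sLast_appOne : ∀ m, sX H (m + 1) m ∘ₗ appOne H m = LinearMap.id
  | 0 => by
    apply LinearMap.ext; intro (h : H)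
    show (TensorProduct.rid ℂ H)
      (TensorProduct.map LinearMap.id Coalgebra.counit (h ⊗ₜ[ℂ] (1 : H))) = h
    simp [Bialgebra.counit_one]
  | m + 1 => by
    show TensorProduct.map LinearMap.id (sX H (m + 1) m)
        ∘ₗ TensorProduct.map LinearMap.id (appOne H m) = LinearMap.id
    rw [← TensorProduct.map_comp, sLast_appOne m, LinearMap.comp_id, TensorProduct.map_id]

lemma sLast_Δiter : ∀ m, sX H (m + 1) m ∘ₗ Δiter H (m + 1) = Δiter H m
  | 0 => by
    apply LinearMap.ext; intro h
    show (TensorProduct.rid ℂ H) (TensorProduct.map LinearMap.id Coalgebra.counit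
      (TensorProduct.map LinearMap.id LinearMap.id (Coalgebra.comul (R := ℂ) h)))
        = LinearMap.id h
    rw [TensorProduct.map_id, LinearMap.id_apply,
      show (TensorProduct.map LinearMap.id (Coalgebra.counit (R := ℂ) (A := H)))
        = (Coalgebra.counit (R := ℂ) (A := H)).lTensor H from rfl,
      Coalgebra.lTensor_counit_comul]
    simp
  | m + 1 => by
    show TensorProduct.map LinearMap.id (sX H (m + 1) m)
        ∘ₗ TensorProduct.map LinearMap.id (Δiter H (m + 1)) ∘ₗ Coalgebra.comul
      = TensorProduct.map LinearMap.id (Δiter H m) ∘ₗ Coalgebra.comul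
    rw [← LinearMap.comp_assoc, ← TensorProduct.map_comp, sLast_Δiter m, LinearMap.comp_id]

lemma sLast_tau (m : ℕ) : sX H (m + 1) m ∘ₗ tauX H δ (m + 1) = GX H δ m := by
  have h1 : sX H (m + 1) m ∘ₗ LinearMap.mul' ℂ (X H (m + 1))
      = LinearMap.mul' ℂ (X H m)
          ∘ₗ TensorProduct.map (sX H (m + 1) m) (sX H (m + 1) m) := by
    rw [← sLastA_toLinearMap]; exact algHom_mul' (sLastA H m)
  show sX H (m + 1) m ∘ₗ LinearMap.mul' ℂ (X H (m + 1))
      ∘ₗ TensorProduct.map (Δiter H (m + 1) ∘ₗ twistedAntipode H δ) (appOne H m) = GX H δ m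
  rw [← LinearMap.comp_assoc, h1, LinearMap.comp_assoc, ← TensorProduct.map_comp,
    ← LinearMap.comp_assoc (twistedAntipode H δ) (Δiter H (m + 1)) (sX H (m + 1) m),
    sLast_Δiter, sLast_appOne]
  rfl

lemma GX_appOne : ∀ m, GX H δ m ∘ₗ appOne H m = tauX H δ m
  | 0 => by
    apply LinearMap.ext; intro (h : H)
    show LinearMap.mul' ℂ (X H 0) (TensorProduct.map (Δiter H 0 ∘ₗ twistedAntipode H δ)
      LinearMap.id ((h : H) ⊗ₜ[ℂ] (1 : X H 0))) = twistedAntipode H δ h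
    simp only [TensorProduct.map_tmul, LinearMap.mul'_apply, LinearMap.comp_apply,
      LinearMap.id_coe, id_eq]
    show Δiter H 0 (twistedAntipode H δ h) * 1 = twistedAntipode H δ h
    rw [mul_one]; rfl
  | m + 1 => by
    show (LinearMap.mul' ℂ (X H (m + 1))
        ∘ₗ TensorProduct.map (Δiter H (m + 1) ∘ₗ twistedAntipode H δ) LinearMap.id)
        ∘ₗ TensorProduct.map LinearMap.id (appOne H m) = tauX H δ (m + 1)
    rw [LinearMap.comp_assoc, ← TensorProduct.map_comp, LinearMap.comp_id,
      LinearMap.id_comp]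
    rfl

lemma X_induction (m : ℕ) {P : X H (m + 1) → Prop} (zero : P 0)
    (add : ∀ u v : X H (m + 1), P u → P v → P (u + v))
    (tmul : ∀ (a : H) (b : X H m), P (a ⊗ₜ[ℂ] b)) (u : X H (m + 1)) : P u := by
  induction u using TensorProduct.induction_on with
  | zero => exact zero
  | add u v hu hv => exact add u v hu hv
  | tmul a b => exact tmul a b

lemma GX_core (m : ℕ) (x : H) (u : X H (m + 1)) :
    GX H δ m (Δiter H (m + 1) x * u) = δ x • GX H δ m u := by
  classical
  set rx := Coalgebra.Repr.arbitrary ℂ x with hrx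
  have hx : Δiter H (m + 1) x
      = Finset.sum (M := X H (m + 1)) rx.index
          (fun j => rx.left j ⊗ₜ[ℂ] Δiter H m (rx.right j)) := by
    show TensorProduct.map LinearMap.id (Δiter H m) (Coalgebra.comul (R := ℂ) x) = _
    rw [show Coalgebra.comul (R := ℂ) x = CoalgebraStruct.comul (R := ℂ) x from rfl,
      ← rx.eq, map_sum]
    simp
    rfl
  induction u using X_induction H m with
  | zero => simp
  | add u v hu hv => rw [mul_add, map_add, hu, hv, map_add, smul_add]
  | tmul a b =>
    erw [hx, Finset.sum_mul, map_sum]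
    have t1 : ∀ j ∈ rx.index,
        GX H δ m (@HMul.hMul (X H (m + 1)) (X H (m + 1)) (X H (m + 1)) _
          (rx.left j ⊗ₜ[ℂ] Δiter H m (rx.right j)) (a ⊗ₜ[ℂ] b))
        = Δiter H m (twistedAntipode H δ a) *
            (Δiter H m (twistedAntipode H δ (rx.left j) * rx.right j) * b) := by
      intro j _
      erw [X_tmul_mul]
      show LinearMap.mul' ℂ (X H m) (TensorProduct.map (Δiter H m ∘ₗ twistedAntipode H δ)
        LinearMap.id ((rx.left j * a) ⊗ₜ[ℂ] (Δiter H m (rx.right j) * b))) = _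
      simp only [TensorProduct.map_tmul, LinearMap.mul'_apply, LinearMap.comp_apply,
        LinearMap.id_coe, id_eq]
      rw [twistedAntipode_mul, Δiter_mul, Δiter_mul]
      simp only [mul_assoc]
    rw [Finset.sum_congr rfl t1, ← Finset.mul_sum]
    have t2 : ∑ j ∈ rx.index,
        Δiter H m (twistedAntipode H δ (rx.left j) * rx.right j) * b = δ x • b := by
      rw [← Finset.sum_mul, ← map_sum, sum_twistedAntipode_mul H δ x rx, map_smul,
        Δiter_one, smul_mul_assoc, one_mul]
    rw [t2, mul_smul_comm]
    have : GX H δ m (a ⊗ₜ[ℂ] b) = Δiter H m (twistedAntipode H δ a) * b := by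
      show LinearMap.mul' ℂ (X H m) (TensorProduct.map (Δiter H m ∘ₗ twistedAntipode H δ)
        LinearMap.id (a ⊗ₜ[ℂ] b)) = _
      simp [LinearMap.mul'_apply]
    rw [this]

lemma GX_tau (m : ℕ) : GX H δ m ∘ₗ tauX H δ (m + 1) = tauX H δ m ∘ₗ sX H 0 m := by
  apply TensorProduct.ext'; intro h t
  show GX H δ m (tauX H δ (m + 1) (h ⊗ₜ[ℂ] t)) = tauX H δ m (sX H 0 m (h ⊗ₜ[ℂ] t))
  have hτ : tauX H δ (m + 1) (h ⊗ₜ[ℂ] t)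
      = Δiter H (m + 1) (twistedAntipode H δ h) * appOne H m t := by
    show LinearMap.mul' ℂ (X H (m + 1)) (TensorProduct.map
      (Δiter H (m + 1) ∘ₗ twistedAntipode H δ) (appOne H m) (h ⊗ₜ[ℂ] t)) = _
    simp [LinearMap.mul'_apply]
  have hσ : sX H 0 m (h ⊗ₜ[ℂ] t) = Coalgebra.counit (R := ℂ) h • t := by
    show (TensorProduct.lid ℂ (X H m))
      (TensorProduct.map Coalgebra.counit LinearMap.id (h ⊗ₜ[ℂ] t)) = _
    simp
  rw [hτ, GX_core, delta_twistedAntipode, hσ, map_smul, ← LinearMap.comp_apply,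
    GX_appOne]

end Main

/-- For every `n ≥ 1` one has `τₙ ∘ σ₀ = σₙ ∘ τ_{n+1}²` as linear maps
`H^{⊗(n+1)} → H^{⊗n}` (here `n = m + 1`, `H^{⊗(n+1)} = X H (m+1)`, `H^{⊗n} = X H m`,
and `σₙ = sX H (m+1) m`). -/
theorem tauX_comp_s0 (δ : H →ₐ[ℂ] ℂ) :
    ∀ m : ℕ,
      tauX H δ m ∘ₗ sX H 0 m =
        sX H (m + 1) m ∘ₗ (tauX H δ (m + 1) ∘ₗ tauX H δ (m + 1)) := by
  intro m
  rw [← GX_tau, ← sLast_tau, LinearMap.comp_assoc]
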